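/- Let A and B be finite multisets of positive integers. If ∏_{w ∈ A} g_w = ∏_{w ∈ B} g_w in ℚ⟦X⟧, then A = B as multisets. -/

import Mathlib

/-- `g w = 1 + 2 ∑_{j ≥ 1} X^{jw}` in `ℚ⟦X⟧`. -/
noncomputable def g (w : ℕ) : PowerSeries ℚ :=
  PowerSeries.mk fun n => if n = 0 then 1 else if w ∣ n then 2 else 0

lemma coeff_g (m w : ℕ) :
    PowerSeries.coeff m (g w) = if m = 0 then 1 else if w ∣ m then 2 else 0 := by
  simp [g]

lemma const_prod (S : Multiset ℕ) :
    PowerSeries.coeff 0 ((S.map g).prod) = 1 := by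
  rw [PowerSeries.coeff_zero_eq_constantCoeff_apply]
  induction S using Multiset.induction with
  | empty => simp
  | cons w s ih =>
    rw [Multiset.map_cons, Multiset.prod_cons, map_mul, ih, mul_one]
    simp [g, PowerSeries.constantCoeff_mk]

lemma coeff_prod_min {m : ℕ} (hm : 0 < m) (S : Multiset ℕ) (hS : ∀ w ∈ S, m ≤ w) :
    PowerSeries.coeff m ((S.map g).prod) = 2 * S.count m := by
  induction S using Multiset.induction with
  | empty =>
    simp [PowerSeries.coeff_one, hm.ne']
  | cons w s ih =>
    have hw : m ≤ w := hS w (Multiset.mem_cons_self _ _)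
    have hs : ∀ x ∈ s, m ≤ x := fun x hx => hS x (Multiset.mem_cons_of_mem hx)
    rw [Multiset.map_cons, Multiset.prod_cons, PowerSeries.coeff_mul]
    have hmem : ((m, 0) : ℕ × ℕ) ∈ Finset.HasAntidiagonal.antidiagonal m := by simp
    rw [← Finset.add_sum_erase _ _ hmem]
    rw [Finset.sum_eq_single ((0, m) : ℕ × ℕ)]
    · rw [const_prod, coeff_g, coeff_g, ih hs]
      simp only [hm.ne', if_neg, if_false, if_pos rfl, mul_one]
      rw [Multiset.count_cons]
      by_cases hwm : w = m
      · subst hwm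
        simp only [Nat.dvd_refl, if_pos rfl, if_pos, one_mul]
        push_cast
        ring
      · have hnd : ¬ w ∣ m := by
          intro hd
          have := Nat.le_of_dvd hm hd
          omega
        rw [if_neg hnd, if_neg (Ne.symm hwm)]
        push_cast
        ring
    · intro b hb hne
      have hb1 : b ∈ Finset.HasAntidiagonal.antidiagonal m := Finset.mem_of_mem_erase hb
      have hbe : b ≠ (m, 0) := Finset.ne_of_mem_erase hb
      have hsum : b.1 + b.2 = m := Finset.HasAntidiagonal.mem_antidiagonal.mp hb1
      have h1 : b.1 ≠ 0 := by
        intro h0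
        apply hne
        have : b.2 = m := by omega
        exact Prod.ext h0 this
      have h2 : b.1 < m := by
        rcases Nat.lt_or_ge b.1 m with h | h
        · exact h
        · exfalso; apply hbe
          have : b.1 = m := by omega
          exact Prod.ext this (by omega)
      have : PowerSeries.coeff b.1 (g w) = 0 := by
        rw [coeff_g, if_neg h1, if_neg]
        intro hd
        have := Nat.le_of_dvd (Nat.pos_of_ne_zero h1) hd
        omega
      rw [this, zero_mul]
    · intro hnot
      exfalso
      apply hnot
      refine Finset.mem_erase.mpr ⟨?_, by simp⟩
      intro heq
      have : (0 : ℕ) = m := congrArg Prod.fst heq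
      omega

theorem stmt_3 (A B : Multiset ℕ) (hA : ∀ x ∈ A, 0 < x) (hB : ∀ x ∈ B, 0 < x)
    (h : (A.map g).prod = (B.map g).prod) : A = B := by
  induction A using Multiset.strongInductionOn generalizing B with
  | ih A ih =>
    by_cases hAB : A + B = 0
    · have h1 : A = 0 := Multiset.le_zero.mp (hAB ▸ Multiset.le_add_right A B)
      have h2 : B = 0 := Multiset.le_zero.mp (hAB ▸ Multiset.le_add_left B A)
      rw [h1, h2]
    · have hne : (A + B).toFinset.Nonempty := by
        rw [Multiset.toFinset_nonempty]
        exact fun h0 => hAB h0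
      set m := (A + B).toFinset.min' hne with hmdef
      have hmmem : m ∈ A + B := by
        have := (A + B).toFinset.min'_mem hne
        rwa [Multiset.mem_toFinset] at this
      have hmle : ∀ x ∈ A + B, m ≤ x := fun x hx =>
        (A + B).toFinset.min'_le x (Multiset.mem_toFinset.mpr hx)
      have hm : 0 < m := by
        rcases Multiset.mem_add.mp hmmem with h' | h'
        · exact hA m h'
        · exact hB m h'
      have hcA : PowerSeries.coeff m ((A.map g).prod) = 2 * A.count m :=
        coeff_prod_min hm A (fun w hw => hmle w (Multiset.mem_add.mpr (Or.inl hw)))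
      have hcB : PowerSeries.coeff m ((B.map g).prod) = 2 * B.count m :=
        coeff_prod_min hm B (fun w hw => hmle w (Multiset.mem_add.mpr (Or.inr hw)))
      have hcount : A.count m = B.count m := by
        have := congrArg (PowerSeries.coeff m) h
        rw [hcA, hcB] at this
        have : (A.count m : ℚ) = B.count m := by linarith
        exact_mod_cast this
      have hsum : 0 < A.count m + B.count m := by
        have := Multiset.count_pos.mpr hmmem
        rwa [Multiset.count_add] at this
      have hmA : m ∈ A := Multiset.count_pos.mp (by omega)
      have hmB : m ∈ B := Multiset.count_pos.mp (by omega)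
      have hA' : A = m ::ₘ A.erase m := (Multiset.cons_erase hmA).symm
      have hB' : B = m ::ₘ B.erase m := (Multiset.cons_erase hmB).symm
      have hg : g m ≠ 0 := by
        intro h0
        have := const_prod ({m} : Multiset ℕ)
        have h1 : PowerSeries.coeff 0 (g m) = 1 := by
          simpa using this
        rw [h0] at h1
        simp at h1
      have hprod : ((A.erase m).map g).prod = ((B.erase m).map g).prod := by
        have h2 : g m * ((A.erase m).map g).prod = g m * ((B.erase m).map g).prod := by
          rw [← Multiset.prod_cons, ← Multiset.prod_cons, ← Multiset.map_cons,
            ← Multiset.map_cons, ← hA', ← hB', h]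
        exact mul_left_cancel₀ hg h2
      have hlt : A.erase m < A := Multiset.erase_lt.mpr hmA
      have := ih (A.erase m) hlt (B.erase m)
        (fun x hx => hA x (Multiset.mem_of_mem_erase hx))
        (fun x hx => hB x (Multiset.mem_of_mem_erase hx)) hprod
      rw [hA', hB', this]
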